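/- arXiv:1007.2159 — 3 statements merged into one kernel-verified Lean document; each statement's English description precedes it below -/
import Mathlib

section
/- Let p be a prime, G a finite group, V an elementary abelian normal p-subgroup of G, and A ∈ 𝒜(G) a subgroup not centralizing V (i.e. [V,A] ≠ 1). Then A is a best offender on V with respect to the conjugation action. -/
/-- A subgroup is *elementary abelian* for the prime `p` if it is commutative and every
element `x` satisfies `x ^ p = 1`. -/
def IsElementaryAbelian (p : ℕ) {G : Type*} [Group G] (A : Subgroup G) : Prop :=
  (∀ a b : A, a * b = b * a) ∧ ∀ a : A, a ^ p = 1

/-- `𝒜(H)`: the set of elementary abelian `p`-subgroups of `H` of maximal order. -/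
def maxElemAbIn (p : ℕ) {G : Type*} [Group G] (H : Subgroup G) : Set (Subgroup G) :=
  {A | A ≤ H ∧ IsElementaryAbelian p A ∧
    ∀ B : Subgroup G, B ≤ H → IsElementaryAbelian p B → Nat.card B ≤ Nat.card A}

/-- The Thompson subgroup `J(H)` of `H`, generated by all members of `𝒜(H)`. -/
def thompsonJ (p : ℕ) {G : Type*} [Group G] (H : Subgroup G) : Subgroup G :=
  sSup (maxElemAbIn p H)

/-- `A` is a *best offender* on the normal subgroup `V` (with conjugation action):
`A/C_A(V)` is a nontrivial elementary abelian `p`-group and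
`|A : C_A(V)|·|C_V(A)| ≥ |B : C_B(V)|·|C_V(B)|` for every subgroup `B ≤ A`. -/
def IsBestOffenderOn (p : ℕ) {G : Type*} [Group G] (A V : Subgroup G) : Prop :=
  (¬ A ≤ Subgroup.centralizer (V : Set G)) ∧
  (∀ a ∈ A, a ^ p ∈ Subgroup.centralizer (V : Set G)) ∧
  (∀ a ∈ A, ∀ b ∈ A, a * b * a⁻¹ * b⁻¹ ∈ Subgroup.centralizer (V : Set G)) ∧
  ∀ B : Subgroup G, B ≤ A →
    (Subgroup.centralizer (V : Set G)).relIndex B *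
        Nat.card ↥(V ⊓ Subgroup.centralizer (B : Set G)) ≤
      (Subgroup.centralizer (V : Set G)).relIndex A *
        Nat.card ↥(V ⊓ Subgroup.centralizer (A : Set G))

/-- G-level characterization of elementary abelian. -/
lemma isElementaryAbelian_iff' {p : ℕ} {G : Type*} [Group G] {A : Subgroup G} :
    IsElementaryAbelian p A ↔
      (∀ a ∈ A, ∀ b ∈ A, a * b = b * a) ∧ ∀ a ∈ A, a ^ p = (1 : G) := by
  constructor
  · rintro ⟨h1, h2⟩
    refine ⟨fun a ha b hb => ?_, fun a ha => ?_⟩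
    · exact congrArg Subtype.val (h1 ⟨a, ha⟩ ⟨b, hb⟩)
    · simpa using congrArg Subtype.val (h2 ⟨a, ha⟩)
  · rintro ⟨h1, h2⟩
    exact ⟨fun a b => Subtype.ext (h1 a a.2 b b.2),
      fun a => Subtype.ext (by simpa using h2 a a.2)⟩

lemma isElementaryAbelian_mono {p : ℕ} {G : Type*} [Group G] {A B : Subgroup G}
    (h : B ≤ A) (hA : IsElementaryAbelian p A) : IsElementaryAbelian p B := by
  rw [isElementaryAbelian_iff'] at *
  exact ⟨fun a ha b hb => hA.1 a (h ha) b (h hb), fun a ha => hA.2 a (h ha)⟩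

lemma isElementaryAbelian_sup {p : ℕ} {G : Type*} [Group G] {S T : Subgroup G}
    (hS : IsElementaryAbelian p S) (hT : IsElementaryAbelian p T)
    (hc : S ≤ Subgroup.centralizer (T : Set G)) : IsElementaryAbelian p (S ⊔ T) := by
  rw [isElementaryAbelian_iff'] at *
  set s : Set G := ↑S ∪ ↑T with hs
  have hsup : S ⊔ T = Subgroup.closure s := by
    rw [hs, Subgroup.closure_union, Subgroup.closure_eq, Subgroup.closure_eq]
  have hcomm : ∀ x ∈ s, ∀ y ∈ s, x * y = y * x := by
    rintro x (hx | hx) y (hy | hy)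
    · exact hS.1 x hx y hy
    · exact (hc hx y hy).symm
    · exact hc hy x hx
    · exact hT.1 x hx y hy
  have hcent := Subgroup.closure_le_centralizer_centralizer s
  have hmul : ∀ x ∈ Subgroup.closure s, ∀ y ∈ Subgroup.closure s, x * y = y * x :=
    fun x hx y hy =>
      Set.centralizer_centralizer_comm_of_comm hcomm x (hcent hx) y (hcent hy)
  constructor
  · intro a ha b hb
    exact hmul a (hsup ▸ ha) b (hsup ▸ hb)
  · intro a ha
    rw [hsup] at ha
    induction ha using Subgroup.closure_induction with
    | mem x hx =>
      rcases hx with hx | hx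
      · exact hS.2 x hx
      · exact hT.2 x hx
    | one => exact one_pow p
    | mul x y hx hy ihx ihy =>
      have hcxy : Commute x y := hmul x hx y hy
      rw [hcxy.mul_pow, ihx, ihy, one_mul]
    | inv x hx ih => rw [inv_pow, ih, inv_one]

lemma card_subgroupOf' {G : Type*} [Group G] {H N : Subgroup G} (h : H ≤ N) :
    Nat.card (H.subgroupOf N) = Nat.card H :=
  Nat.card_congr (Subgroup.subgroupOfEquivOfLe h).toEquiv

lemma relindex_mul_card_inf {G : Type*} [Group G] [Finite G] (C B : Subgroup G) :
    C.relIndex B * Nat.card (C ⊓ B : Subgroup G) = Nat.card B := by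
  have h1 : Nat.card (C.subgroupOf B) = Nat.card (C ⊓ B : Subgroup G) := by
    rw [← Subgroup.inf_subgroupOf_right C B]
    exact card_subgroupOf' inf_le_right
  have h2 := Subgroup.index_mul_card (C.subgroupOf B)
  rw [Subgroup.relIndex, ← h1]
  simpa using h2

lemma card_sup_mul_card_inf {G : Type*} [Group G] [Finite G] (H K : Subgroup G)
    (h : H ≤ Subgroup.centralizer (K : Set G)) :
    Nat.card (H ⊔ K : Subgroup G) * Nat.card (H ⊓ K : Subgroup G) =
      Nat.card H * Nat.card K := by
  have hHN : H ≤ Subgroup.normalizer (K : Set G) := by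
    intro x hx
    rw [Subgroup.mem_normalizer_iff]
    intro y
    constructor
    · intro hy
      have hcomm := h hx y hy
      have hxy : x * y * x⁻¹ = y := by rw [← hcomm]; group
      rw [hxy]; exact hy
    · intro hy
      have hcomm := h hx _ hy
      have h3 : x * y = x * (x * y * x⁻¹) := by rw [← hcomm]; group
      rw [mul_left_cancel h3]; exact hy
  set N := Subgroup.normalizer (K : Set G) with hN
  haveI : (K.subgroupOf N).Normal := Subgroup.normal_in_normalizer
  set H' := H.subgroupOf N with hH'
  set K' := K.subgroupOf N with hK'
  have e := QuotientGroup.quotientInfEquivProdNormalQuotient H' K'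
  have hq : Nat.card (H' ⧸ K'.subgroupOf H') =
      Nat.card ((H' ⊔ K' : Subgroup N) ⧸ K'.subgroupOf (H' ⊔ K')) := Nat.card_congr e.toEquiv
  have h1 : Nat.card H' = Nat.card (H' ⧸ K'.subgroupOf H') * Nat.card (K'.subgroupOf H') :=
    Subgroup.card_eq_card_quotient_mul_card_subgroup _
  have h2 : Nat.card (H' ⊔ K' : Subgroup N) =
      Nat.card ((H' ⊔ K' : Subgroup N) ⧸ K'.subgroupOf (H' ⊔ K')) *
        Nat.card (K'.subgroupOf (H' ⊔ K')) :=
    Subgroup.card_eq_card_quotient_mul_card_subgroup _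
  have cH : Nat.card H' = Nat.card H := card_subgroupOf' hHN
  have cKN : Nat.card K' = Nat.card K := card_subgroupOf' Subgroup.le_normalizer
  have hKH' : K' ⊓ H' = (K ⊓ H).subgroupOf N := by
    ext x
    simp [hK', hH', Subgroup.mem_subgroupOf, Subgroup.mem_inf]
  have cKH : Nat.card (K'.subgroupOf H') = Nat.card (H ⊓ K : Subgroup G) := by
    rw [← Subgroup.inf_subgroupOf_right K' H', card_subgroupOf' inf_le_right, hKH',
      card_subgroupOf' (le_trans inf_le_left Subgroup.le_normalizer), inf_comm]
  have cK2 : Nat.card (K'.subgroupOf (H' ⊔ K' : Subgroup N)) = Nat.card K := by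
    rw [card_subgroupOf' le_sup_right, cKN]
  have cSup : Nat.card (H' ⊔ K' : Subgroup N) = Nat.card (H ⊔ K : Subgroup G) := by
    rw [← Subgroup.subgroupOf_sup hHN Subgroup.le_normalizer]
    exact card_subgroupOf' (sup_le hHN Subgroup.le_normalizer)
  rw [← cSup, h2, ← hq, cK2, mul_right_comm]
  rw [cH, cKH] at h1
  rw [← h1, mul_comm (Nat.card H)]

/-- Let `V` be an elementary abelian normal `p`-subgroup of a finite group
`G` and let `A ∈ 𝒜(G)` with `[V, A] ≠ 1`.  Then `A` is a best offender on `V`. -/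
theorem isBestOffender_of_mem_maxElemAb
    {p : ℕ} (hp : p.Prime) {G : Type*} [Group G] [Finite G]
    (V A : Subgroup G) (hV : V.Normal) (hVea : IsElementaryAbelian p V)
    (hA : A ∈ maxElemAbIn p (⊤ : Subgroup G)) (hVA : ⁅V, A⁆ ≠ ⊥) :
    IsBestOffenderOn p A V := by
  obtain ⟨-, hAea, hAmax⟩ := hA
  set C := Subgroup.centralizer (V : Set G) with hC
  have hAea' := isElementaryAbelian_iff'.mp hAea
  have hAcent : A ≤ Subgroup.centralizer (A : Set G) := fun x hx y hy => hAea'.1 y hy x hx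
  refine ⟨?_, ?_, ?_, ?_⟩
  · intro h
    exact hVA (Subgroup.commutator_eq_bot_iff_le_centralizer.mpr
      (Subgroup.le_centralizer_iff.mpr h))
  · intro a ha
    rw [hAea'.2 a ha]
    exact one_mem C
  · intro a ha b hb
    have : a * b * a⁻¹ * b⁻¹ = 1 := by
      rw [hAea'.1 a ha b hb]; group
    rw [this]
    exact one_mem C
  · intro B hBA
    set X := C ⊓ A with hX
    set W := V ⊓ Subgroup.centralizer (B : Set G) with hW
    set Z := V ⊓ Subgroup.centralizer (A : Set G) with hZ
    have hXA : X ≤ A := inf_le_right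
    have hXB_le_A : X ⊔ B ≤ A := sup_le hXA hBA
    have hXB_ea : IsElementaryAbelian p (X ⊔ B) := isElementaryAbelian_mono hXB_le_A hAea
    have hW_ea : IsElementaryAbelian p W := isElementaryAbelian_mono inf_le_left hVea
    have hXB_cent_W : X ⊔ B ≤ Subgroup.centralizer (W : Set G) := by
      refine sup_le (le_trans inf_le_left ?_) ?_
      · exact Subgroup.centralizer_le (by exact_mod_cast SetLike.coe_subset_coe.mpr inf_le_left)
      · exact Subgroup.le_centralizer_iff.mpr inf_le_right
    have hD_ea : IsElementaryAbelian p ((X ⊔ B) ⊔ W) :=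
      isElementaryAbelian_sup hXB_ea hW_ea hXB_cent_W
    have hcardD : Nat.card ((X ⊔ B) ⊔ W : Subgroup G) ≤ Nat.card A :=
      hAmax _ le_top hD_ea
    have hXcentB : X ≤ Subgroup.centralizer (B : Set G) :=
      le_trans hXA (le_trans hAcent (Subgroup.centralizer_le
        (SetLike.coe_subset_coe.mpr hBA)))
    have hP1 : Nat.card (X ⊔ B : Subgroup G) * Nat.card (X ⊓ B : Subgroup G) =
        Nat.card X * Nat.card B := card_sup_mul_card_inf X B hXcentB
    have hP2 : Nat.card ((X ⊔ B) ⊔ W : Subgroup G) *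
          Nat.card ((X ⊔ B) ⊓ W : Subgroup G) =
        Nat.card (X ⊔ B : Subgroup G) * Nat.card W :=
      card_sup_mul_card_inf _ W hXB_cent_W
    have hXBinf : X ⊓ B = C ⊓ B := by
      rw [hX, inf_assoc, inf_eq_right.mpr hBA]
    have hinfZ : (X ⊔ B) ⊓ W ≤ Z := by
      refine le_inf (le_trans inf_le_right inf_le_left) ?_
      have h1 : (X ⊔ B) ⊓ W ≤ A := le_trans inf_le_left hXB_le_A
      exact le_trans h1 hAcent
    have hcardZ : Nat.card ((X ⊔ B) ⊓ W : Subgroup G) ≤ Nat.card Z :=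
      Subgroup.card_le_of_le hinfZ
    have hrB : C.relIndex B * Nat.card (C ⊓ B : Subgroup G) = Nat.card B :=
      relindex_mul_card_inf C B
    have hrA : C.relIndex A * Nat.card X = Nat.card A := relindex_mul_card_inf C A
    have hposX : 0 < Nat.card X := Nat.card_pos
    have hposCB : 0 < Nat.card (C ⊓ B : Subgroup G) := Nat.card_pos
    -- main chain
    have key : C.relIndex B * Nat.card W * (Nat.card X * Nat.card (C ⊓ B : Subgroup G)) ≤
        C.relIndex A * Nat.card Z * (Nat.card X * Nat.card (C ⊓ B : Subgroup G)) := by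
      calc C.relIndex B * Nat.card W * (Nat.card X * Nat.card (C ⊓ B : Subgroup G))
          = (C.relIndex B * Nat.card (C ⊓ B : Subgroup G)) * Nat.card W * Nat.card X := by ring
        _ = Nat.card B * Nat.card W * Nat.card X := by rw [hrB]
        _ = (Nat.card X * Nat.card B) * Nat.card W := by ring
        _ = (Nat.card (X ⊔ B : Subgroup G) * Nat.card (X ⊓ B : Subgroup G)) * Nat.card W := by
            rw [hP1]
        _ = (Nat.card (X ⊔ B : Subgroup G) * Nat.card W) * Nat.card (X ⊓ B : Subgroup G) := by
            ring
        _ = (Nat.card ((X ⊔ B) ⊔ W : Subgroup G) * Nat.card ((X ⊔ B) ⊓ W : Subgroup G)) *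
              Nat.card (X ⊓ B : Subgroup G) := by rw [hP2]
        _ ≤ (Nat.card A * Nat.card Z) * Nat.card (X ⊓ B : Subgroup G) :=
            Nat.mul_le_mul_right _ (Nat.mul_le_mul hcardD hcardZ)
        _ = (C.relIndex A * Nat.card X * Nat.card Z) * Nat.card (C ⊓ B : Subgroup G) := by
            rw [hrA, hXBinf]
        _ = C.relIndex A * Nat.card Z * (Nat.card X * Nat.card (C ⊓ B : Subgroup G)) := by
            ring
    exact Nat.le_of_mul_le_mul_right
      (by simpa [mul_assoc] using key) (Nat.mul_pos hposX hposCB)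
end

section
/- Let p be a prime, G a finite group, V an elementary abelian normal p-subgroup of G, and A ∈ 𝒜(G) a subgroup not centralizing V. Assume A is not an over-offender on V, i.e. |V : C_V(A)| ≥ |A : C_A(V)|. Then V·C_A(V) ∈ 𝒜(G); in particular, every member of 𝒜(C_G(V)) belongs to 𝒜(G) and J(C_G(V)) ≤ J(G). -/
open scoped Pointwise


lemma aux_relindex_card {G : Type*} [Group G] [Finite G] (H K : Subgroup G) :
    H.relIndex K * Nat.card ↥(H ⊓ K) = Nat.card K := by
  have h1 : Nat.card ↥(H.subgroupOf K) = Nat.card ↥(H ⊓ K) := by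
    rw [← Subgroup.inf_subgroupOf_right]
    exact Nat.card_congr (Subgroup.subgroupOfEquivOfLe (inf_le_right : H ⊓ K ≤ K)).toEquiv
  have := Subgroup.index_mul_card (H.subgroupOf K)
  rw [h1] at this
  simpa [Subgroup.relIndex] using this

/-- Let `V` be an elementary abelian normal `p`-subgroup of a finite group
`G`, and `A ∈ 𝒜(G)` with `[V, A] ≠ 1`.  If `A` is not an over-offender on `V`, i.e.
`|V : C_V(A)| ≥ |A : C_A(V)|`, then `V·C_A(V) ∈ 𝒜(G)`; in particular every member of
`𝒜(C_G(V))` belongs to `𝒜(G)`, and `J(C_G(V)) ≤ J(G)`. -/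
theorem mul_centralizer_mem_maxElemAb_of_not_overOffender
    {p : ℕ} (hp : p.Prime) {G : Type*} [Group G] [Finite G]
    (V A : Subgroup G) (hV : V.Normal) (hVea : IsElementaryAbelian p V)
    (hA : A ∈ maxElemAbIn p (⊤ : Subgroup G)) (hVA : ⁅V, A⁆ ≠ ⊥)
    (hno : (Subgroup.centralizer ((V : Subgroup G) : Set G)).relIndex A ≤
      (Subgroup.centralizer ((A : Subgroup G) : Set G)).relIndex V) :
    V ⊔ (A ⊓ Subgroup.centralizer (V : Set G)) ∈ maxElemAbIn p (⊤ : Subgroup G) ∧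
      (∀ B ∈ maxElemAbIn p (Subgroup.centralizer (V : Set G)),
        B ∈ maxElemAbIn p (⊤ : Subgroup G)) ∧
      thompsonJ p (Subgroup.centralizer (V : Set G)) ≤ thompsonJ p (⊤ : Subgroup G) := by
  classical
  set C : Subgroup G := Subgroup.centralizer (V : Set G) with hCdef
  set K : Subgroup G := A ⊓ C with hKdef
  set W : Subgroup G := V ⊔ K with hWdef
  -- V ≤ C since V is abelian
  have hVC : V ≤ C := by
    intro x hx
    exact Subgroup.mem_centralizer_iff.2 fun g hg =>
      congrArg Subtype.val (hVea.1 ⟨g, hg⟩ ⟨x, hx⟩)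
  have hWC : W ≤ C := sup_le hVC inf_le_right
  -- decomposition of elements of W
  have hmem : ∀ x ∈ W, ∃ v ∈ V, ∃ c ∈ K, v * c = x := by
    intro x hx
    have : x ∈ ((V : Set G) * (K : Set G)) := by
      rw [← Subgroup.normal_mul]; exact hx
    simpa [Set.mem_mul] using this
  -- basic commutation facts
  have hvc : ∀ v ∈ V, ∀ c ∈ K, Commute v c := fun v hv c hc =>
    (Subgroup.mem_centralizer_iff.1 hc.2 v hv)
  have hvv : ∀ v ∈ V, ∀ v' ∈ V, Commute v v' := fun v hv v' hv' =>
    congrArg Subtype.val (hVea.1 ⟨v, hv⟩ ⟨v', hv'⟩)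
  have hcc : ∀ c ∈ K, ∀ c' ∈ K, Commute c c' := fun c hc c' hc' =>
    congrArg Subtype.val (hA.2.1.1 ⟨c, hc.1⟩ ⟨c', hc'.1⟩)
  have hcom : ∀ x ∈ W, ∀ y ∈ W, Commute x y := by
    intro x hx y hy
    obtain ⟨v, hv, c, hc, rfl⟩ := hmem x hx
    obtain ⟨v', hv', c', hc', rfl⟩ := hmem y hy
    exact Commute.mul_left
      ((hvv v hv v' hv').mul_right (hvc v hv c' hc'))
      (((hvc v' hv' c hc).symm).mul_right (hcc c hc c' hc'))
  -- W is elementary abelian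
  have hWea : IsElementaryAbelian p W := by
    constructor
    · intro a b
      exact Subtype.ext (hcom a a.2 b b.2)
    · intro x
      obtain ⟨v, hv, c, hc, hx⟩ := hmem (x : G) x.2
      have hvp : v ^ p = 1 := by
        have := congrArg Subtype.val (hVea.2 ⟨v, hv⟩)
        simpa using this
      have hcp : c ^ p = 1 := by
        have := congrArg Subtype.val (hA.2.1.2 ⟨c, hc.1⟩)
        simpa using this
      have : (x : G) ^ p = 1 := by
        rw [← hx, (hvc v hv c hc).mul_pow, hvp, hcp, one_mul]
      exact Subtype.ext (by simpa using this)
  -- the counting argument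
  have key : Nat.card A ≤ Nat.card W := by
    have h1 : C.relIndex A * Nat.card ↥(C ⊓ A) = Nat.card A := aux_relindex_card _ _
    have h2 : (Subgroup.centralizer (A : Set G)).relIndex V *
        Nat.card ↥(Subgroup.centralizer (A : Set G) ⊓ V) = Nat.card V := aux_relindex_card _ _
    have h3 : V.relIndex K * Nat.card ↥(V ⊓ K) = Nat.card K := aux_relindex_card _ _
    have h4 : V.relIndex W * Nat.card ↥(V ⊓ W) = Nat.card W := aux_relindex_card _ _
    have h5 : V ⊓ W = V := inf_of_le_left le_sup_left
    have h6 : V.relIndex W = V.relIndex K := by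
      haveI := hV; rw [hWdef]; exact Subgroup.relIndex_sup_left K V
    have h7 : C ⊓ A = K := by rw [hKdef, inf_comm]
    have h4' : Nat.card W = V.relIndex K * Nat.card V := by
      rw [← h4, h5, h6]
    have hVAle : V ⊓ K ≤ Subgroup.centralizer (A : Set G) ⊓ V := by
      intro x hx
      refine Subgroup.mem_inf.2 ⟨Subgroup.mem_centralizer_iff.2 fun g hg => ?_, hx.1⟩
      exact congrArg Subtype.val (hA.2.1.1 ⟨g, hg⟩ ⟨x, hx.2.1⟩)
    have hi : Nat.card ↥(V ⊓ K) ≤ Nat.card ↥(Subgroup.centralizer (A : Set G) ⊓ V) :=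
      Subgroup.card_le_of_le hVAle
    have pos : 0 < Nat.card ↥(V ⊓ K) := Nat.card_pos
    have step : Nat.card A * Nat.card ↥(V ⊓ K) ≤ Nat.card W * Nat.card ↥(V ⊓ K) := by
      calc Nat.card A * Nat.card ↥(V ⊓ K)
          = C.relIndex A * (Nat.card K * Nat.card ↥(V ⊓ K)) := by
            rw [← h1, h7]; ring
        _ ≤ (Subgroup.centralizer (A : Set G)).relIndex V *
              (Nat.card K * Nat.card ↥(Subgroup.centralizer (A : Set G) ⊓ V)) :=
            Nat.mul_le_mul hno (Nat.mul_le_mul_left _ hi)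
        _ = Nat.card K * ((Subgroup.centralizer (A : Set G)).relIndex V *
              Nat.card ↥(Subgroup.centralizer (A : Set G) ⊓ V)) := by ring
        _ = Nat.card K * Nat.card V := by rw [h2]
        _ = (V.relIndex K * Nat.card ↥(V ⊓ K)) * Nat.card V := by rw [h3]
        _ = (V.relIndex K * Nat.card V) * Nat.card ↥(V ⊓ K) := by ring
        _ = Nat.card W * Nat.card ↥(V ⊓ K) := by rw [h4']
    exact Nat.le_of_mul_le_mul_right step pos
  -- assemble
  have hWmem : W ∈ maxElemAbIn p (⊤ : Subgroup G) :=
    ⟨le_top, hWea, fun B _ hB => (hA.2.2 B le_top hB).trans key⟩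
  have hsub : ∀ B ∈ maxElemAbIn p C, B ∈ maxElemAbIn p (⊤ : Subgroup G) := by
    intro B hB
    refine ⟨le_top, hB.2.1, fun D _ hD => ?_⟩
    exact (hA.2.2 D le_top hD).trans (key.trans (hB.2.2 W hWC hWea))
  exact ⟨hWmem, hsub, sSup_le_sSup hsub⟩
end

section
/- Let n ≥ 1, m = 2n+1, and let G = Sym(m) act on the F_2-vector space V = {v ∈ (F_2)^m : v_1 + ⋯ + v_m = 0} by permuting coordinates (V is the natural S_m-module over F_2). Then there is no over-offender in G on V: every subgroup A ≤ G such that A/C_A(V) is a nontrivial elementary abelian 2-group satisfies |V : C_V(A)| ≥ |A : C_A(V)|. -/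
/-- The natural `S_m`-module over `F₂` for odd `m`: the even-weight subspace
`{v ∈ (F₂)^m : Σᵢ vᵢ = 0}` of the permutation module. -/
def evenWeightSub (m : ℕ) : AddSubgroup (Fin m → ZMod 2) where
  carrier := {v | ∑ i, v i = 0}
  zero_mem' := by simp
  add_mem' := by
    intro a b ha hb
    simp only [Set.mem_setOf_eq, Pi.add_apply, Finset.sum_add_distrib] at *
    rw [ha, hb, add_zero]
  neg_mem' := by
    intro a ha
    simp only [Set.mem_setOf_eq, Pi.neg_apply, Finset.sum_neg_distrib] at *
    rw [ha, neg_zero]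

/-- `C_V(A)`: the fixed points in the permutation module of a subgroup `A` of permutations,
as an additive subgroup of the function space. -/
def permFixedSub (m : ℕ) (A : Subgroup (Equiv.Perm (Fin m))) :
    AddSubgroup (Fin m → ZMod 2) where
  carrier := {v | ∀ σ ∈ A, ∀ i, v (σ i) = v i}
  zero_mem' := by intro σ _ i; rfl
  add_mem' := by
    intro a b ha hb σ hσ i
    simp only [Pi.add_apply, ha σ hσ i, hb σ hσ i]
  neg_mem' := by
    intro a ha σ hσ i
    simp only [Pi.neg_apply, ha σ hσ i]

/-- The kernel of the action of `Sym(m)` on the natural module `V`: the permutations fixing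
every even-weight vector. -/
def permActKer (m : ℕ) : Subgroup (Equiv.Perm (Fin m)) where
  carrier := {σ | ∀ v : Fin m → ZMod 2, (∑ i, v i = 0) → ∀ i, v (σ i) = v i}
  one_mem' := by intro v _ i; rfl
  mul_mem' := by
    intro a b ha hb v hv i
    rw [Equiv.Perm.mul_apply, ha v hv (b i), hb v hv i]
  inv_mem' := by
    intro a ha v hv i
    have := ha v hv (a⁻¹ i)
    rw [show a (a⁻¹ i) = i from a.apply_symm_apply i] at this
    exact this.symm

lemma permActKer_eq_bot (m : ℕ) (hm : 3 ≤ m) : permActKer m = ⊥ := by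
  rw [eq_bot_iff]
  intro σ hσ
  rw [Subgroup.mem_bot]
  by_contra h
  obtain ⟨i, hne⟩ : ∃ i, σ i ≠ i := by
    by_contra hc
    push_neg at hc
    exact h (Equiv.ext fun i => hc i)
  obtain ⟨k, hk⟩ : (({i, σ i} : Finset (Fin m))ᶜ).Nonempty := by
    rw [← Finset.card_pos, Finset.card_compl]
    have h2 : ({i, σ i} : Finset (Fin m)).card ≤ 2 := Finset.card_insert_le _ _ |>.trans (by simp)
    have : Fintype.card (Fin m) = m := by simp
    omega
  simp only [Finset.mem_compl, Finset.mem_insert, Finset.mem_singleton, not_or] at hk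
  obtain ⟨hki, hks⟩ := hk
  set v : Fin m → ZMod 2 := fun j => (if j = i then 1 else 0) + (if j = k then 1 else 0) with hv
  have hsum : ∑ j, v j = 0 := by
    rw [hv]
    rw [Finset.sum_add_distrib, Finset.sum_ite_eq' Finset.univ i (fun _ => (1 : ZMod 2)),
      Finset.sum_ite_eq' Finset.univ k (fun _ => (1 : ZMod 2))]
    simp
    decide
  have key := hσ v hsum i
  have h1 : v (σ i) = 0 := by
    rw [hv]
    simp only []
    rw [if_neg hne, if_neg (fun e => hks e.symm), add_zero]
  have h2 : v i = 1 := by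
    rw [hv]
    simp only []
    simp [Ne.symm hki]
  rw [h1, h2] at key
  exact one_ne_zero key.symm


lemma key_card_bound (m : ℕ) (hm3 : 3 ≤ m) (hmodd : (m : ZMod 2) = 1)
    (A : Subgroup (Equiv.Perm (Fin m))) (hAcomm : ∀ x y : A, x * y = y * x) :
    Nat.card A ≤ (permFixedSub m A).relIndex (evenWeightSub m) := by
  classical
  -- orbit quotient machinery
  let Ω := MulAction.orbitRel.Quotient A (Fin m)
  letI : Fintype Ω := Fintype.ofFinite Ω
  let π : Fin m → Ω := Quotient.mk''
  have hsame : ∀ i j : Fin m, π i = π j → ∃ a : A, (a : Equiv.Perm (Fin m)) j = i := by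
    intro i j hij
    have h1 : i ∈ MulAction.orbit A j := by
      rw [← MulAction.orbitRel_apply]
      exact Quotient.eq''.mp hij
    obtain ⟨a, ha⟩ := h1
    exact ⟨a, ha⟩
  have hπσ : ∀ (σ : A) (i : Fin m), π ((σ : Equiv.Perm (Fin m)) i) = π i := by
    intro σ i
    apply Quotient.sound'
    rw [MulAction.orbitRel_apply]
    exact ⟨σ, rfl⟩
  let out : Ω → Fin m := Quotient.out
  have hout : ∀ O : Ω, π (out O) = O := fun O => Quotient.out_eq' O
  let N : Ω → ℕ := fun O => Nat.card {i : Fin m // π i = O}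
  have hNft : ∀ O : Ω, N O = Fintype.card {i : Fin m // π i = O} := fun O =>
    Nat.card_eq_fintype_card
  have hN1 : ∀ O : Ω, 1 ≤ N O := by
    intro O
    have : Nonempty {i : Fin m // π i = O} := ⟨⟨out O, hout O⟩⟩
    exact Nat.card_pos
  have hNsum : ∑ O : Ω, N O = m := by
    have e := Fintype.card_congr (Equiv.sigmaFiberEquiv π)
    rw [Fintype.card_sigma, Fintype.card_fin] at e
    rw [Finset.sum_congr rfl (fun O _ => hNft O)]
    exact e
  set r := Fintype.card Ω with hr
  have hrm : r ≤ m := by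
    rw [← hNsum, hr, ← Finset.card_univ, Finset.card_eq_sum_ones]
    exact Finset.sum_le_sum (fun O _ => hN1 O)
  -- |A| ≤ ∏ N O
  have hA_le : Nat.card A ≤ ∏ O : Ω, N O := by
    rw [← Nat.card_pi]
    apply Nat.card_le_card_of_injective
      (fun σ : A => fun O : Ω => (⟨(σ : Equiv.Perm (Fin m)) (out O), by rw [hπσ σ, hout]⟩ :
        {i : Fin m // π i = O}))
    intro σ τ hστ
    have hagree : ∀ O : Ω, (σ : Equiv.Perm (Fin m)) (out O) = (τ : Equiv.Perm (Fin m)) (out O) := by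
      intro O
      have := congrFun hστ O
      exact Subtype.ext_iff.mp this
    apply Subtype.ext
    apply Equiv.ext
    intro i
    obtain ⟨a, ha⟩ := hsame i (out (π i)) (by rw [hout])
    have hcs : (σ : Equiv.Perm (Fin m)) * a = a * σ := by
      have := hAcomm σ a
      exact_mod_cast congrArg (Subtype.val) this
    have hct : (τ : Equiv.Perm (Fin m)) * a = a * τ := by
      have := hAcomm τ a
      exact_mod_cast congrArg (Subtype.val) this
    calc (σ : Equiv.Perm (Fin m)) i
        = ((σ : Equiv.Perm (Fin m)) * a) (out (π i)) := by
          rw [Equiv.Perm.mul_apply, ha]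
      _ = ((a : Equiv.Perm (Fin m)) * τ) (out (π i)) := by
          rw [hcs, Equiv.Perm.mul_apply, Equiv.Perm.mul_apply, hagree]
      _ = (τ : Equiv.Perm (Fin m)) i := by
          rw [← hct, Equiv.Perm.mul_apply, ha]
  -- ∏ N O ≤ 2 ^ (m - r)
  have hprod : ∏ O : Ω, N O ≤ 2 ^ (m - r) := by
    calc ∏ O : Ω, N O ≤ ∏ O : Ω, 2 ^ (N O - 1) := by
          apply Finset.prod_le_prod (fun _ _ => Nat.zero_le _)
          intro O _
          have h1 := hN1 O
          have h2 : N O - 1 < 2 ^ (N O - 1) := Nat.lt_two_pow_self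
          omega
      _ = 2 ^ (∑ O : Ω, (N O - 1)) := Finset.prod_pow_eq_pow_sum _ _ _
      _ = 2 ^ (m - r) := by
          congr 1
          have : ∑ O : Ω, (N O - 1) + ∑ O : Ω, 1 = ∑ O : Ω, N O := by
            rw [← Finset.sum_add_distrib]
            exact Finset.sum_congr rfl (fun O _ => by have := hN1 O; omega)
          simp only [Finset.sum_const, Finset.card_univ, smul_eq_mul, mul_one] at this
          omega
  -- card of V
  let s : (Fin m → ZMod 2) →+ ZMod 2 :=
    { toFun := fun v => ∑ i, v i
      map_zero' := by simp
      map_add' := by intro a b; simp [Finset.sum_add_distrib] }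
  have hVker : evenWeightSub m = s.ker := by
    ext v
    exact Iff.rfl
  have hs_surj : Function.Surjective s := by
    intro x
    refine ⟨fun _ => x, ?_⟩
    show ∑ _i : Fin m, x = x
    rw [Finset.sum_const, Finset.card_univ, Fintype.card_fin, nsmul_eq_mul, hmodd, one_mul]
  have hcardV : Nat.card (evenWeightSub m) * 2 = 2 ^ m := by
    have h1 := AddSubgroup.card_mul_index s.ker
    rw [AddSubgroup.index_ker] at h1
    rw [AddMonoidHom.range_eq_top.mpr hs_surj] at h1
    have h2 : Nat.card (⊤ : AddSubgroup (ZMod 2)) = 2 := by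
      rw [Nat.card_congr AddSubgroup.topEquiv.toEquiv, Nat.card_zmod]
    have h3 : Nat.card (Fin m → ZMod 2) = 2 ^ m := by
      rw [Nat.card_pi]
      simp [Nat.card_zmod]
    rw [h2, h3] at h1
    rw [hVker]
    exact h1
  -- card of C ⊓ V
  let t : (Ω → ZMod 2) →+ ZMod 2 :=
    { toFun := fun c => ∑ i, c (π i)
      map_zero' := by simp
      map_add' := by intro a b; simp [Finset.sum_add_distrib] }
  have hconst : ∀ v, v ∈ permFixedSub m A → ∀ i j : Fin m, π i = π j → v i = v j := by
    intro v hv i j hij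
    obtain ⟨a, ha⟩ := hsame i j hij
    rw [← ha]
    exact hv a a.2 j
  have hCV : Nat.card ((permFixedSub m A) ⊓ (evenWeightSub m) : AddSubgroup (Fin m → ZMod 2))
      = Nat.card t.ker := by
    apply Nat.card_congr
    refine Equiv.symm ⟨fun c => ⟨fun i => c.1 (π i), ?_, ?_⟩, fun v => ⟨fun O => v.1 (out O), ?_⟩,
      ?_, ?_⟩
    · intro σ hσ i
      exact congrArg c.1 (hπσ ⟨σ, hσ⟩ i)
    · exact c.2
    · have hv2 : ∑ i, v.1 i = 0 := v.2.2
      show ∑ i, v.1 (out (π i)) = 0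
      rw [← hv2]
      apply Finset.sum_congr rfl
      intro i _
      exact hconst v.1 v.2.1 (out (π i)) i (by rw [hout])
    · intro c
      apply Subtype.ext
      funext O
      show c.1 (π (out O)) = c.1 O
      rw [hout]
    · intro v
      apply Subtype.ext
      funext i
      show v.1 (out (π i)) = v.1 i
      exact hconst v.1 v.2.1 (out (π i)) i (by rw [hout])
  have ht_surj : Function.Surjective t := by
    obtain ⟨O₀, hO₀⟩ : ∃ O : Ω, (N O : ZMod 2) = 1 := by
      by_contra hc
      push_neg at hc
      have hzo : ∀ z : ZMod 2, z = 0 ∨ z = 1 := by decide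
      have hall : ∀ O : Ω, (N O : ZMod 2) = 0 := fun O => (hzo _).resolve_right (hc O)
      have hzero : ((m : ℕ) : ZMod 2) = 0 := by
        rw [← hNsum]
        push_cast
        rw [Finset.sum_congr rfl (fun O _ => hall O)]
        simp
      rw [hmodd] at hzero
      exact one_ne_zero hzero
    intro x
    refine ⟨fun O => if O = O₀ then x else 0, ?_⟩
    show (∑ i, if π i = O₀ then x else 0) = x
    rw [← Finset.sum_filter, Finset.sum_const]
    have hcard : (Finset.univ.filter (fun i => π i = O₀)).card = N O₀ := by
      rw [hNft, Fintype.card_subtype]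
    rw [hcard, nsmul_eq_mul, hO₀, one_mul]
  have hcardCV : Nat.card ((permFixedSub m A) ⊓ (evenWeightSub m) :
      AddSubgroup (Fin m → ZMod 2)) * 2 = 2 ^ r := by
    rw [hCV]
    have h1 := AddSubgroup.card_mul_index t.ker
    rw [AddSubgroup.index_ker] at h1
    rw [AddMonoidHom.range_eq_top.mpr ht_surj] at h1
    have h2 : Nat.card (⊤ : AddSubgroup (ZMod 2)) = 2 := by
      rw [Nat.card_congr AddSubgroup.topEquiv.toEquiv, Nat.card_zmod]
    have h3 : Nat.card (Ω → ZMod 2) = 2 ^ r := by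
      rw [Nat.card_pi]
      simp [Nat.card_zmod, hr]
    rw [h2, h3] at h1
    exact h1
  -- relindex equation
  set R := (permFixedSub m A).relIndex (evenWeightSub m) with hR
  have hrel : Nat.card ((permFixedSub m A) ⊓ (evenWeightSub m) :
      AddSubgroup (Fin m → ZMod 2)) * R = Nat.card (evenWeightSub m) := by
    have h1 := AddSubgroup.card_mul_index ((permFixedSub m A).addSubgroupOf (evenWeightSub m))
    have h2 : Nat.card ((permFixedSub m A).addSubgroupOf (evenWeightSub m)) =
        Nat.card ((permFixedSub m A) ⊓ (evenWeightSub m) : AddSubgroup (Fin m → ZMod 2)) := by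
      rw [← AddSubgroup.inf_addSubgroupOf_right]
      exact Nat.card_congr (AddSubgroup.addSubgroupOfEquivOfLe inf_le_right).toEquiv
    rw [h2] at h1
    exact h1
  -- final arithmetic
  set cA := Nat.card A
  set cCV := Nat.card ((permFixedSub m A) ⊓ (evenWeightSub m) : AddSubgroup (Fin m → ZMod 2))
  have hAbound : cA ≤ 2 ^ (m - r) := le_trans hA_le hprod
  have hpow : 2 ^ (m - r) * 2 ^ r = 2 ^ m := by
    rw [← pow_add]
    congr 1
    omega
  have hmain : cA * (cCV * 2) ≤ R * (cCV * 2) := by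
    calc cA * (cCV * 2) ≤ 2 ^ (m - r) * 2 ^ r := by
          rw [hcardCV]
          exact Nat.mul_le_mul_right _ hAbound
      _ = 2 ^ m := hpow
      _ = Nat.card (evenWeightSub m) * 2 := hcardV.symm
      _ = (cCV * R) * 2 := by rw [hrel]
      _ = R * (cCV * 2) := by ring
  have hpos : 0 < cCV * 2 := by rw [hcardCV]; positivity
  exact Nat.le_of_mul_le_mul_right hmain hpos

/-- Let `m = 2n+1` with `n ≥ 1`, and let `G = Sym(m)` act on the natural
`S_m`-module `V = {v ∈ (F₂)^m : Σᵢ vᵢ = 0}` by permuting coordinates.  Then there is no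
over-offender in `G` on `V`: every subgroup `A ≤ G` such that `A/C_A(V)` is a nontrivial
elementary abelian `2`-group satisfies `|V : C_V(A)| ≥ |A : C_A(V)|`. -/
theorem no_overoffender_on_natural_symmetric_module
    (n : ℕ) (hn : 1 ≤ n) (A : Subgroup (Equiv.Perm (Fin (2 * n + 1))))
    (hnontriv : ¬ A ≤ permActKer (2 * n + 1))
    (hexp : ∀ σ ∈ A, σ ^ 2 ∈ permActKer (2 * n + 1))
    (hcomm : ∀ σ ∈ A, ∀ τ ∈ A, σ * τ * σ⁻¹ * τ⁻¹ ∈ permActKer (2 * n + 1)) :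
    (permActKer (2 * n + 1)).relIndex A ≤
      (permFixedSub (2 * n + 1) A).relIndex (evenWeightSub (2 * n + 1)) := by
  have hm3 : 3 ≤ 2 * n + 1 := by omega
  have hK : permActKer (2 * n + 1) = ⊥ := permActKer_eq_bot _ hm3
  rw [hK, Subgroup.relIndex_bot_left]
  have hmodd : ((2 * n + 1 : ℕ) : ZMod 2) = 1 := by
    push_cast
    have h2 : (2 : ZMod 2) = 0 := by decide
    rw [h2]
    ring
  apply key_card_bound _ hm3 hmodd A
  intro x y
  have hc := hcomm x x.2 y y.2
  rw [hK, Subgroup.mem_bot] at hc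
  have : (x : Equiv.Perm (Fin (2 * n + 1))) * y = y * x :=
    commutatorElement_eq_one_iff_mul_comm.mp hc
  exact Subtype.ext this
end
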